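/- arXiv:1609.01621 — 4 statements merged into one kernel-verified Lean document; each statement's English description precedes it below -/
import Mathlib

section
/- Let u : [a,b] → [0,∞) and ρ : [0,∞) → [0,∞) be continuous functions such that ρ is strictly increasing with ρ(0) = 0 and ∫₀^ε dx/ρ(x) = ∞ for every ε > 0. If u(t) ≤ ∫ₐ^t ρ(u(s)) ds for all t ∈ [a,b], then u(t) = 0 for all t ∈ [a,b]. -/
open MeasureTheory Set intervalIntegral

/-- Bihari's lemma. -/
theorem bihari_lemma (a b : ℝ) (hab : a < b) (u ρ : ℝ → ℝ)
    (hu_cont : ContinuousOn u (Icc a b))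
    (hu_nonneg : ∀ t ∈ Icc a b, 0 ≤ u t)
    (hρ_cont : ContinuousOn ρ (Ici 0))
    (hρ_nonneg : ∀ x ∈ Ici (0:ℝ), 0 ≤ ρ x)
    (hρ_mono : StrictMonoOn ρ (Ici 0))
    (hρ0 : ρ 0 = 0)
    (hρ_div : ∀ ε > (0:ℝ), ∫⁻ x in Ioc (0:ℝ) ε, ENNReal.ofReal (1 / ρ x) = ⊤)
    (hineq : ∀ t ∈ Icc a b, u t ≤ ∫ s in a..t, ρ (u s)) :
    ∀ t ∈ Icc a b, u t = 0 := by
  have hρpos : ∀ x : ℝ, 0 < x → 0 < ρ x := fun x hx => by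
    have := hρ_mono (le_refl (0:ℝ)) hx.le hx
    rwa [hρ0] at this
  -- globally continuous extension of `u`
  set U : ℝ → ℝ := fun t => u (max a (min t b)) with hU_def
  have hU_cont : Continuous U := hu_cont.comp_continuous
    (continuous_const.max (continuous_id.min continuous_const))
    (fun x => ⟨le_max_left _ _, max_le hab.le (min_le_right _ _)⟩)
  have hU_eq : ∀ t ∈ Icc a b, U t = u t := by
    intro t ht
    simp only [hU_def]
    rw [min_eq_left ht.2, max_eq_right ht.1]
  -- globally continuous version of `ρ ∘ u`
  set g : ℝ → ℝ := fun t => ρ (max 0 (U t)) with hg_def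
  have hg_cont : Continuous g := hρ_cont.comp_continuous
    (continuous_const.max hU_cont) (fun x => mem_Ici.mpr (le_max_left _ _))
  have hg_nonneg : ∀ t, 0 ≤ g t := fun t => hρ_nonneg _ (mem_Ici.mpr (le_max_left _ _))
  have hg_eq : ∀ t ∈ Icc a b, g t = ρ (u t) := by
    intro t ht
    simp only [hg_def]
    rw [hU_eq t ht, max_eq_right (hu_nonneg t ht)]
  set v : ℝ → ℝ := fun t => ∫ s in a..t, g s with hv_def
  have hv_deriv : ∀ t : ℝ, HasDerivAt v (g t) t := fun t =>
    intervalIntegral.integral_hasDerivAt_right (hg_cont.intervalIntegrable a t)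
      (hg_cont.stronglyMeasurableAtFilter _ _) hg_cont.continuousAt
  have hv_cont : Continuous v := by
    rw [continuous_iff_continuousAt]
    exact fun t => (hv_deriv t).continuousAt
  have hv_mono : Monotone v := by
    intro s t hst
    have h1 : v t - v s = ∫ x in s..t, g x :=
      intervalIntegral.integral_interval_sub_left (hg_cont.intervalIntegrable a t)
        (hg_cont.intervalIntegrable a s)
    have h2 : 0 ≤ ∫ x in s..t, g x :=
      intervalIntegral.integral_nonneg hst (fun x _ => hg_nonneg x)
    linarith
  have hva : v a = 0 := intervalIntegral.integral_same
  have huv : ∀ t ∈ Icc a b, u t ≤ v t := by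
    intro t ht
    have h1 : (∫ s in a..t, ρ (u s)) = v t := by
      apply intervalIntegral.integral_congr
      intro s hs
      rw [uIcc_of_le ht.1] at hs
      exact (hg_eq s ⟨hs.1, hs.2.trans ht.2⟩).symm
    rw [← h1]
    exact hineq t ht
  by_cases hvb : v b = 0
  · intro t ht
    have h1 := huv t ht
    have h2 : v t ≤ v b := hv_mono ht.2
    have h3 := hu_nonneg t ht
    linarith
  · exfalso
    have hvb' : 0 < v b := lt_of_le_of_ne (hva ▸ hv_mono hab.le) (Ne.symm hvb)
    set S : Set ℝ := Icc a b ∩ {t | v t = 0} with hS_def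
    have haS : a ∈ S := ⟨⟨le_rfl, hab.le⟩, hva⟩
    have hS_bdd : BddAbove S := ⟨b, fun t ht => ht.1.2⟩
    set c := sSup S with hc_def
    have hcS : c ∈ S := by
      have hclosed : IsClosed S :=
        isClosed_Icc.inter (isClosed_eq hv_cont continuous_const)
      exact hclosed.csSup_mem ⟨a, haS⟩ hS_bdd
    have hc_mem : c ∈ Icc a b := hcS.1
    have hvc : v c = 0 := hcS.2
    have hcb : c < b := lt_of_le_of_ne hc_mem.2 (fun h => hvb (h ▸ hvc))
    have hpos : ∀ t, c < t → t ≤ b → 0 < v t := by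
      intro t hct htb
      rcases (hvc ▸ hv_mono hct.le : (0:ℝ) ≤ v t).lt_or_eq with h | h
      · exact h
      · exact absurd (le_csSup hS_bdd ⟨⟨hc_mem.1.trans hct.le, htb⟩, h.symm⟩)
          (not_le.mpr hct)
    set b' := (c + b) / 2 with hb'_def
    have hcb' : c < b' := by simp only [hb'_def]; linarith
    have hb'b : b' < b := by simp only [hb'_def]; linarith
    set ε := v b' with hε_def
    have hεpos : 0 < ε := hpos b' hcb' hb'b.le
    have hab' : a ≤ b' := hc_mem.1.trans hcb'.le
    -- continuity of 1/ρ away from 0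
    have hinv_cont : ∀ δ : ℝ, 0 < δ → ContinuousOn (fun x => 1 / ρ x) (Icc δ ε) := by
      intro δ hδ
      apply ContinuousOn.div continuousOn_const
        (hρ_cont.mono (fun x hx => hδ.le.trans hx.1))
      exact fun x hx => ne_of_gt (hρpos x (hδ.trans_le hx.1))
    -- the key bound
    have key : ∀ δ : ℝ, 0 < δ → δ < ε →
        (∫⁻ x in Ioc δ ε, ENNReal.ofReal (1 / ρ x)) ≤ ENNReal.ofReal (b - a) := by
      intro δ hδ0 hδε
      obtain ⟨c', hc'mem, hvc'⟩ : ∃ c' ∈ Icc c b', v c' = δ := by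
        have h := intermediate_value_Icc hcb'.le hv_cont.continuousOn
        have : δ ∈ Icc (v c) (v b') := ⟨hvc ▸ hδ0.le, hδε.le⟩
        obtain ⟨c', hc', hc'eq⟩ := h this
        exact ⟨c', hc', hc'eq⟩
      have hc'b' : c' ≤ b' := hc'mem.2
      have hc'ab : ∀ t ∈ Icc c' b', t ∈ Icc a b :=
        fun t ht => ⟨hc_mem.1.trans (hc'mem.1.trans ht.1), ht.2.trans hb'b.le⟩
      have himg : ∀ t ∈ Icc c' b', v t ∈ Icc δ ε :=
        fun t ht => ⟨hvc' ▸ hv_mono ht.1, hv_mono ht.2⟩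
      have hcov : (∫ x in c'..b', g x • ((fun y => 1 / ρ y) ∘ v) x)
          = ∫ x in v c'..v b', 1 / ρ x := by
        apply intervalIntegral.integral_comp_smul_deriv'
          (fun x _ => hv_deriv x) hg_cont.continuousOn
        rw [uIcc_of_le hc'b']
        exact (hinv_cont δ hδ0).mono
          (fun y hy => by obtain ⟨t, ht, rfl⟩ := hy; exact himg t ht)
      have hbound : (∫ x in c'..b', g x • ((fun y => 1 / ρ y) ∘ v) x) ≤ b' - c' := by
        have h1 : (∫ x in c'..b', (1:ℝ)) = b' - c' := by simp
        rw [← h1]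
        apply intervalIntegral.integral_mono_on hc'b'
        · apply ContinuousOn.intervalIntegrable
          rw [uIcc_of_le hc'b']
          exact hg_cont.continuousOn.smul
            ((hinv_cont δ hδ0).comp hv_cont.continuousOn himg)
        · exact intervalIntegrable_const
        · intro x hx
          have hxab := hc'ab x hx
          have hgx : g x ≤ ρ (v x) := by
            rw [hg_eq x hxab]
            rcases (huv x hxab).lt_or_eq with h | h
            · exact (hρ_mono (hu_nonneg x hxab)
                ((hu_nonneg x hxab).trans h.le) h).le
            · rw [h]
          have hρvx : 0 < ρ (v x) := hρpos _ (hδ0.trans_le (himg x hx).1)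
          have : g x * (1 / ρ (v x)) ≤ 1 := by
            rw [mul_one_div, div_le_one hρvx]
            exact hgx
          simpa using this
      have hfin : (∫ x in Ioc δ ε, 1 / ρ x) ≤ b - a := by
        have h2 : (∫ x in δ..ε, 1 / ρ x) = ∫ x in Ioc δ ε, 1 / ρ x :=
          intervalIntegral.integral_of_le hδε.le
        have h3 : (∫ x in v c'..v b', 1 / ρ x) = ∫ x in Ioc δ ε, 1 / ρ x := by
          rw [hvc', ← hε_def] at *
          exact h2
        have h4 : b' - c' ≤ b - a := by
          have := hc'mem.1
          have := hc_mem.1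
          simp only [hb'_def] at *
          linarith
        rw [← h3, ← hcov]
        linarith
      have hint : IntegrableOn (fun x => 1 / ρ x) (Ioc δ ε) := by
        apply ((hinv_cont δ hδ0).integrableOn_Icc).mono_set Ioc_subset_Icc_self
      have hnn : 0 ≤ᵐ[volume.restrict (Ioc δ ε)] fun x => 1 / ρ x := by
        filter_upwards [ae_restrict_mem measurableSet_Ioc] with x hx
        simp only [Pi.zero_apply]
        exact le_of_lt (div_pos one_pos (hρpos x (hδ0.trans hx.1)))
      rw [← MeasureTheory.ofReal_integral_eq_lintegral_ofReal hint hnn]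
      exact ENNReal.ofReal_le_ofReal hfin
    -- derive the contradiction using monotone convergence
    have hdiv := hρ_div ε hεpos
    set f : ℝ → ENNReal := fun x => ENNReal.ofReal (1 / ρ x) with hf_def
    set δseq : ℕ → ℝ := fun n => ε / (n + 2) with hδseq_def
    have hδseq_pos : ∀ n, 0 < δseq n := fun n => by
      simp only [hδseq_def]; positivity
    have hδseq_lt : ∀ n, δseq n < ε := fun n => by
      simp only [hδseq_def]
      rw [div_lt_iff₀ (by positivity)]
      nlinarith [hεpos]
    have hδseq_anti : Antitone δseq := by
      intro m n hmn
      simp only [hδseq_def]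
      apply div_le_div_of_nonneg_left hεpos.le (by positivity)
      have : (m:ℝ) ≤ n := Nat.cast_le.mpr hmn
      linarith
    set F : ℕ → ℝ → ENNReal := fun n => (Ioc (δseq n) ε).indicator f with hF_def
    have hFmeas : ∀ n, AEMeasurable (F n) := by
      intro n
      rw [aemeasurable_indicator_iff measurableSet_Ioc]
      have hc : ContinuousOn f (Ioc (δseq n) ε) := by
        apply ENNReal.continuous_ofReal.comp_continuousOn
        exact (hinv_cont _ (hδseq_pos n)).mono Ioc_subset_Icc_self
      exact hc.aemeasurable measurableSet_Ioc
    have hFmono : ∀ x, Monotone fun n => F n x := by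
      intro x m n hmn
      exact Set.indicator_le_indicator_of_subset
        (Ioc_subset_Ioc_left (hδseq_anti hmn)) (fun _ => zero_le) x
    have hFsup : ∀ x, (⨆ n, F n x) = (Ioc 0 ε).indicator f x := by
      intro x
      by_cases hx : x ∈ Ioc (0:ℝ) ε
      · obtain ⟨n, hn⟩ := exists_nat_gt (ε / x)
        have hx0 : 0 < x := hx.1
        have hlt : δseq n < x := by
          simp only [hδseq_def]
          rw [div_lt_iff₀ (by positivity)]
          rw [div_lt_iff₀ hx0] at hn
          nlinarith
        rw [Set.indicator_of_mem hx]
        apply le_antisymm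
        · apply iSup_le
          intro m
          by_cases hxm : x ∈ Ioc (δseq m) ε
          · rw [hF_def]; simp only [Set.indicator_of_mem hxm]; exact le_rfl
          · rw [hF_def]; simp only [Set.indicator_of_notMem hxm]; exact zero_le
        · have hmem : x ∈ Ioc (δseq n) ε := ⟨hlt, hx.2⟩
          have : F n x = f x := Set.indicator_of_mem hmem f
          rw [← this]
          exact le_iSup (fun n => F n x) n
      · rw [Set.indicator_of_notMem hx]
        apply le_antisymm _ (zero_le)
        apply iSup_le
        intro m
        have : x ∉ Ioc (δseq m) ε := fun h => hx ⟨(hδseq_pos m).trans h.1, h.2⟩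
        rw [hF_def]; simp only [Set.indicator_of_notMem this]; exact le_rfl
      
    have hcontr : (∫⁻ x in Ioc (0:ℝ) ε, f x) ≤ ENNReal.ofReal (b - a) := by
      rw [← lintegral_indicator measurableSet_Ioc]
      have : (fun x => (Ioc (0:ℝ) ε).indicator f x) = fun x => ⨆ n, F n x := by
        funext x; exact (hFsup x).symm
      rw [this, lintegral_iSup' hFmeas (Filter.Eventually.of_forall hFmono)]
      apply iSup_le
      intro n
      rw [lintegral_indicator measurableSet_Ioc]
      exact key (δseq n) (hδseq_pos n) (hδseq_lt n)
    rw [hdiv] at hcontr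
    exact absurd hcontr (by simp [ENNReal.ofReal_lt_top.ne])
end

section
/- Let r > 0 and let A, B : [r,∞) → (0,∞) be continuous. Define u₀ ≡ 1 and recursively uₙ(x) = ∫ᵣ^x exp(−∫ᵣ^y B(z) dz) ∫ᵣ^y uₙ₋₁(v) · (2 exp(∫ᵣ^v B(z) dz)/A(v)) dv dy for x ≥ r. Then for all n ≥ 0 and x ≥ r one has uₙ(x) ≤ u₁(x)ⁿ/n!. -/
open MeasureTheory Set intervalIntegral

private lemma hasDerivAt_primitive' {f : ℝ → ℝ} (hf : Continuous f) (a x : ℝ) :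
    HasDerivAt (fun t => ∫ s in a..t, f s) (f x) x :=
  intervalIntegral.integral_hasDerivAt_right (hf.intervalIntegrable a x)
    hf.aestronglyMeasurable.stronglyMeasurableAtFilter hf.continuousAt

private lemma continuous_primitive' {f : ℝ → ℝ} (hf : Continuous f) (a : ℝ) :
    Continuous (fun t => ∫ s in a..t, f s) :=
  continuous_iff_continuousAt.2 fun x => (hasDerivAt_primitive' hf a x).continuousAt

/-- The recursively defined functions `uₙ` satisfy `uₙ(x) ≤ u₁(x)ⁿ / n!`. -/
theorem recursive_u_factorial_bound (r : ℝ) (hr : 0 < r) (A B : ℝ → ℝ)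
    (hA_cont : ContinuousOn A (Ici r)) (hA_pos : ∀ x ∈ Ici r, 0 < A x)
    (hB_cont : ContinuousOn B (Ici r)) (hB_pos : ∀ x ∈ Ici r, 0 < B x)
    (u : ℕ → ℝ → ℝ)
    (hu0 : ∀ x, u 0 x = 1)
    (hurec : ∀ n : ℕ, ∀ x : ℝ,
      u (n + 1) x = ∫ y in r..x, Real.exp (-∫ z in r..y, B z) *
        ∫ v in r..y, u n v * (2 * Real.exp (∫ z in r..v, B z) / A v)) :
    ∀ n : ℕ, ∀ x ∈ Ici r, u n x ≤ (u 1 x) ^ n / (Nat.factorial n) := by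
  have hπ_cont : Continuous (fun x : ℝ => max x r) := continuous_id.max continuous_const
  have hπ_mem : ∀ x : ℝ, max x r ∈ Ici r := fun x => le_max_right x r
  set A' : ℝ → ℝ := fun x => A (max x r) with hA'def
  set B' : ℝ → ℝ := fun x => B (max x r) with hB'def
  have hA'c : Continuous A' := hA_cont.comp_continuous hπ_cont hπ_mem
  have hB'c : Continuous B' := hB_cont.comp_continuous hπ_cont hπ_mem
  have hA'pos : ∀ x, 0 < A' x := fun x => hA_pos _ (hπ_mem x)
  have hAA : ∀ v ∈ Ici r, A v = A' v := fun v hv => by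
    simp only [hA'def, max_eq_left (show r ≤ v from hv)]
  set P : ℝ → ℝ := fun y => ∫ z in r..y, B' z with hPdef
  have hPc : Continuous P := continuous_primitive' hB'c r
  -- the B-integrals agree
  have hPB : ∀ y ∈ Ici r, (∫ z in r..y, B z) = P y := by
    intro y hy
    refine (intervalIntegral.integral_congr ?_).symm
    intro z hz
    rw [uIcc_of_le hy] at hz
    simp only [hB'def, max_eq_left hz.1]
  set w : ℝ → ℝ := fun v => 2 * Real.exp (P v) / A' v with hwdef
  have hwc : Continuous w :=
    ((continuous_const.mul (Real.continuous_exp.comp hPc)).div hA'c fun x => (hA'pos x).ne')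
  have hwpos : ∀ v, 0 < w v := fun v =>
    div_pos (by positivity) (hA'pos v)
  set g : ℝ → ℝ := fun y => Real.exp (-P y) * ∫ v in r..y, w v with hgdef
  have hgc : Continuous g :=
    (Real.continuous_exp.comp hPc.neg).mul (continuous_primitive' hwc r)
  have hgnn : ∀ y ∈ Ici r, 0 ≤ g y := by
    intro y hy
    refine mul_nonneg (Real.exp_nonneg _) ?_
    exact intervalIntegral.integral_nonneg hy fun v _ => (hwpos v).le
  set U : ℝ → ℝ := fun x => ∫ y in r..x, g y with hUdef
  have hUderiv : ∀ x, HasDerivAt U (g x) x := hasDerivAt_primitive' hgc r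
  have hUc : Continuous U := continuous_primitive' hgc r
  have hUr : U r = 0 := intervalIntegral.integral_same
  have hUnn : ∀ x ∈ Ici r, 0 ≤ U x := fun x hx =>
    intervalIntegral.integral_nonneg hx fun y hy => hgnn y hy.1
  have hUmono : ∀ a ∈ Ici r, ∀ b, a ≤ b → U a ≤ U b := by
    intro a ha b hab
    have h1 : U b - U a = ∫ y in a..b, g y :=
      intervalIntegral.integral_interval_sub_left (hgc.intervalIntegrable r b)
        (hgc.intervalIntegrable r a)
    have h2 : 0 ≤ ∫ y in a..b, g y :=
      intervalIntegral.integral_nonneg hab fun y hy => hgnn y (le_trans ha hy.1)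
    linarith
  -- u 1 = U on Ici r
  have hu1 : ∀ x ∈ Ici r, u 1 x = U x := by
    intro x hx
    rw [hurec 0 x]
    refine intervalIntegral.integral_congr ?_
    intro y hy
    rw [uIcc_of_le hx] at hy
    have hyr : y ∈ Ici r := hy.1
    beta_reduce
    rw [hPB y hyr]
    congr 1
    refine intervalIntegral.integral_congr ?_
    intro v hv
    rw [uIcc_of_le hyr] at hv
    have hvr : v ∈ Ici r := hv.1
    beta_reduce
    rw [hu0 v, hPB v hvr, one_mul, hAA v hvr]
  -- main induction
  have main : ∀ n : ℕ, (∃ f : ℝ → ℝ, Continuous f ∧ ∀ x ∈ Ici r, u n x = f x) ∧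
      ∀ x ∈ Ici r, u n x ≤ U x ^ n / (Nat.factorial n) := by
    intro n
    induction n with
    | zero =>
      refine ⟨⟨fun _ => 1, continuous_const, fun x _ => hu0 x⟩, fun x hx => ?_⟩
      simp [hu0 x]
    | succ n ih =>
      obtain ⟨⟨f, hfc, hfe⟩, hbd⟩ := ih
      set G : ℝ → ℝ := fun y => Real.exp (-P y) * ∫ v in r..y, f v * w v with hGdef
      have hGc : Continuous G :=
        (Real.continuous_exp.comp hPc.neg).mul (continuous_primitive' (hfc.mul hwc) r)
      have hueq : ∀ x ∈ Ici r, u (n + 1) x = ∫ y in r..x, G y := by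
        intro x hx
        rw [hurec n x]
        refine intervalIntegral.integral_congr ?_
        intro y hy
        rw [uIcc_of_le hx] at hy
        have hyr : y ∈ Ici r := hy.1
        beta_reduce
        rw [hPB y hyr]
        congr 1
        refine intervalIntegral.integral_congr ?_
        intro v hv
        rw [uIcc_of_le hyr] at hv
        have hvr : v ∈ Ici r := hv.1
        beta_reduce
        rw [hfe v hvr, hPB v hvr, hAA v hvr]
      refine ⟨⟨fun x => ∫ y in r..x, G y, continuous_primitive' hGc r, hueq⟩, ?_⟩
      intro x hx
      rw [hueq x hx]
      -- pointwise bound on G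
      have hGle : ∀ y ∈ Icc r x, G y ≤ U y ^ n / (Nat.factorial n) * g y := by
        intro y hy
        have hyr : y ∈ Ici r := hy.1
        have hinner : (∫ v in r..y, f v * w v) ≤
            U y ^ n / (Nat.factorial n) * ∫ v in r..y, w v := by
          rw [← intervalIntegral.integral_const_mul]
          refine intervalIntegral.integral_mono_on hyr
            ((hfc.mul hwc).intervalIntegrable r y)
            ((continuous_const.mul hwc).intervalIntegrable r y) ?_
          intro v hv
          have hvr : v ∈ Ici r := hv.1
          have h1 : f v ≤ U v ^ n / (Nat.factorial n) := hfe v hvr ▸ hbd v hvr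
          have h2 : U v ^ n ≤ U y ^ n :=
            pow_le_pow_left₀ (hUnn v hvr) (hUmono v hvr y hv.2) n
          have h3 : f v ≤ U y ^ n / (Nat.factorial n) := by
            refine le_trans h1 ?_
            exact div_le_div_of_nonneg_right h2 (by positivity) |>.trans_eq rfl
          exact mul_le_mul_of_nonneg_right h3 (hwpos v).le
        calc G y ≤ Real.exp (-P y) * (U y ^ n / (Nat.factorial n) * ∫ v in r..y, w v) :=
              mul_le_mul_of_nonneg_left hinner (Real.exp_nonneg _)
          _ = U y ^ n / (Nat.factorial n) * g y := by rw [hgdef]; ring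
      have hmono : (∫ y in r..x, G y) ≤
          ∫ y in r..x, U y ^ n / (Nat.factorial n) * g y :=
        intervalIntegral.integral_mono_on hx (hGc.intervalIntegrable r x)
          (((hUc.pow n).div_const _).mul hgc |>.intervalIntegrable r x) hGle
      have hFTC : (∫ y in r..x, U y ^ n / (Nat.factorial n) * g y)
          = U x ^ (n + 1) / (Nat.factorial (n + 1)) := by
        have hder : ∀ y ∈ uIcc r x,
            HasDerivAt (fun t => U t ^ (n + 1) / (Nat.factorial (n + 1)))
              (U y ^ n / (Nat.factorial n) * g y) y := by
          intro y _
          have h := ((hUderiv y).pow (n + 1)).div_const ((Nat.factorial (n + 1) : ℝ))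
          refine h.congr_deriv ?_
          rw [Nat.add_sub_cancel]; push_cast
          have hfac : ((Nat.factorial (n + 1) : ℝ)) =
              ((n : ℝ) + 1) * (Nat.factorial n : ℝ) := by
            rw [Nat.factorial_succ]; push_cast; ring
          rw [hfac]
          have hnf : (Nat.factorial n : ℝ) ≠ 0 := by positivity
          field_simp
        rw [intervalIntegral.integral_eq_sub_of_hasDerivAt hder
          ((((hUc.pow n).div_const _).mul hgc).intervalIntegrable r x)]
        rw [hUr]
        simp
      calc (∫ y in r..x, G y) ≤ ∫ y in r..x, U y ^ n / (Nat.factorial n) * g y := hmono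
        _ = U x ^ (n + 1) / (Nat.factorial (n + 1)) := hFTC
  intro n x hx
  rw [hu1 x hx]
  exact (main n).2 x hx
end

section
/- Let r > 0 and A, B : [r,∞) → (0,∞) be continuous, and define uₙ as above with u₀ ≡ 1. Then the series u := Σₙ₌₀^∞ uₙ converges absolutely, locally uniformly on [r,∞), u is twice continuously differentiable, nondecreasing, and satisfies A(x) u''(x) + A(x) B(x) u'(x) = 2 u(x) for all x ≥ r. -/
open MeasureTheory Set intervalIntegral Filter Topology

lemma aux_ftc {r : ℝ} {h : ℝ → ℝ} (hc : ContinuousOn h (Ici r)) :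
    ∀ x ∈ Ici r, HasDerivWithinAt (fun t => ∫ s in r..t, h s) (h x) (Ici r) x := by
  intro x hx
  have hint : IntervalIntegrable h volume r x := by
    apply ContinuousOn.intervalIntegrable
    rw [uIcc_of_le hx]
    exact hc.mono Icc_subset_Ici_self
  have hmeas : AEStronglyMeasurable h (volume.restrict (Ici r)) :=
    hc.aestronglyMeasurable measurableSet_Ici
  rcases eq_or_lt_of_le (mem_Ici.1 hx) with h1 | h1
  · subst h1
    exact intervalIntegral.integral_hasDerivWithinAt_right (t := Ioi r) hint
      ⟨Ici r, mem_of_superset self_mem_nhdsWithin Ioi_subset_Ici_self, hmeas⟩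
      ((hc r hx).mono Ioi_subset_Ici_self)
  · have hmem : Ici r ∈ 𝓝 x := Ici_mem_nhds h1
    exact (intervalIntegral.integral_hasDerivAt_right hint ⟨Ici r, hmem, hmeas⟩
      ((hc x hx).continuousAt hmem)).hasDerivWithinAt

lemma aux_ftc_cont {r : ℝ} {h : ℝ → ℝ} (hc : ContinuousOn h (Ici r)) :
    ContinuousOn (fun t => ∫ s in r..t, h s) (Ici r) :=
  fun x hx => (aux_ftc hc x hx).continuousWithinAt

lemma aux_mono {r : ℝ} {f f' : ℝ → ℝ} (hc : ContinuousOn f (Ici r))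
    (hd : ∀ x ∈ Ici r, HasDerivWithinAt f (f' x) (Ici r) x)
    (h0 : ∀ x ∈ Ici r, 0 ≤ f' x) : MonotoneOn f (Ici r) := by
  apply monotoneOn_of_deriv_nonneg (convex_Ici r) hc
  · rw [interior_Ici]
    exact fun x hx =>
      ((hd x (mem_Ici.2 (mem_Ioi.1 hx).le)).hasDerivAt (Ici_mem_nhds hx)).differentiableAt.differentiableWithinAt
  · rw [interior_Ici]
    intro x hx
    rw [((hd x (mem_Ici.2 (mem_Ioi.1 hx).le)).hasDerivAt (Ici_mem_nhds hx)).deriv]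
    exact h0 x (mem_Ici.2 (mem_Ioi.1 hx).le)

lemma aux_nonneg {r : ℝ} {f f' : ℝ → ℝ} (hc : ContinuousOn f (Ici r))
    (hd : ∀ x ∈ Ici r, HasDerivWithinAt f (f' x) (Ici r) x)
    (h0 : ∀ x ∈ Ici r, 0 ≤ f' x) (hfr : f r = 0) : ∀ x ∈ Ici r, 0 ≤ f x := by
  intro x hx
  have := aux_mono hc hd h0 (self_mem_Ici) hx hx
  rwa [hfr] at this

/-- The series `u = Σₙ uₙ` converges absolutely locally uniformly on `[r,∞)`,
is twice continuously differentiable, nondecreasing, and satisfies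
`A u'' + A B u' = 2 u` on `[r,∞)`. -/
theorem series_u_solves_ode (r : ℝ) (hr : 0 < r) (A B : ℝ → ℝ)
    (hA_cont : ContinuousOn A (Ici r)) (hA_pos : ∀ x ∈ Ici r, 0 < A x)
    (hB_cont : ContinuousOn B (Ici r)) (hB_pos : ∀ x ∈ Ici r, 0 < B x)
    (u : ℕ → ℝ → ℝ)
    (hu0 : ∀ x, u 0 x = 1)
    (hurec : ∀ n : ℕ, ∀ x : ℝ,
      u (n + 1) x = ∫ y in r..x, Real.exp (-∫ z in r..y, B z) *
        ∫ v in r..y, u n v * (2 * Real.exp (∫ z in r..v, B z) / A v)) :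
    (∀ x ∈ Ici r, Summable (fun n => |u n x|)) ∧
    TendstoLocallyUniformlyOn (fun N x => ∑ n ∈ Finset.range N, u n x)
      (fun x => ∑' n, u n x) atTop (Ici r) ∧
    MonotoneOn (fun x => ∑' n, u n x) (Ici r) ∧
    ∃ U' U'' : ℝ → ℝ,
      (∀ x ∈ Ici r, HasDerivWithinAt (fun y => ∑' n, u n y) (U' x) (Ici r) x) ∧
      (∀ x ∈ Ici r, HasDerivWithinAt U' (U'' x) (Ici r) x) ∧
      ContinuousOn U' (Ici r) ∧ ContinuousOn U'' (Ici r) ∧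
      (∀ x ∈ Ici r, A x * U'' x + A x * B x * U' x = 2 * ∑' n, u n x) := by
  -- abbreviations
  obtain ⟨Ei, hEi⟩ : ∃ Ei : ℝ → ℝ, ∀ y, Ei y = Real.exp (-∫ z in r..y, B z) :=
    ⟨_, fun _ => rfl⟩
  obtain ⟨g, hg⟩ : ∃ g : ℝ → ℝ, ∀ v, g v = 2 * Real.exp (∫ z in r..v, B z) / A v :=
    ⟨_, fun _ => rfl⟩
  have hrec : ∀ (n : ℕ) (x : ℝ), u (n + 1) x = ∫ y in r..x, Ei y * ∫ v in r..y, u n v * g v := by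
    intro n x
    rw [hurec]
    simp only [hEi, hg]
  have hu_succ : ∀ n : ℕ, u (n + 1) = fun x => ∫ y in r..x, Ei y * ∫ v in r..y, u n v * g v :=
    fun n => funext (hrec n)
  -- basic facts about the primitive of B, Ei and g
  have hPc : ContinuousOn (fun y => ∫ z in r..y, B z) (Ici r) := aux_ftc_cont hB_cont
  have hPnn : ∀ y ∈ Ici r, 0 ≤ ∫ z in r..y, B z := fun y hy =>
    intervalIntegral.integral_nonneg hy (fun z hz => (hB_pos z hz.1).le)
  have hEi_fun : Ei = fun y => Real.exp (-∫ z in r..y, B z) := funext hEi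
  have hg_fun : g = fun v => 2 * Real.exp (∫ z in r..v, B z) / A v := funext hg
  have hEi_cont : ContinuousOn Ei (Ici r) := by
    rw [hEi_fun]; exact Real.continuous_exp.comp_continuousOn hPc.neg
  have hg_cont : ContinuousOn g (Ici r) := by
    rw [hg_fun]
    exact ((continuousOn_const.mul (Real.continuous_exp.comp_continuousOn hPc)).div
      hA_cont (fun x hx => (hA_pos x hx).ne'))
  have hEi_pos : ∀ y, 0 < Ei y := fun y => by rw [hEi]; exact Real.exp_pos _
  have hEi_le_one : ∀ y ∈ Ici r, Ei y ≤ 1 := fun y hy => by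
    rw [hEi]; exact Real.exp_le_one_iff.2 (neg_nonpos.2 (hPnn y hy))
  have hg_nonneg : ∀ v ∈ Ici r, 0 ≤ g v := fun v hv => by
    rw [hg]; exact div_nonneg (by positivity) (hA_pos v hv).le
  -- the basic operator facts
  have hT : ∀ f : ℝ → ℝ, ContinuousOn f (Ici r) →
      ContinuousOn (fun y => ∫ v in r..y, f v * g v) (Ici r) ∧
      (∀ x ∈ Ici r, HasDerivWithinAt (fun x => ∫ y in r..x, Ei y * ∫ v in r..y, f v * g v)
        (Ei x * ∫ v in r..x, f v * g v) (Ici r) x) ∧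
      ContinuousOn (fun x => ∫ y in r..x, Ei y * ∫ v in r..y, f v * g v) (Ici r) := by
    intro f hf
    have h1 : ContinuousOn (fun v => f v * g v) (Ici r) := hf.mul hg_cont
    have h2 := aux_ftc_cont h1
    have h3 : ContinuousOn (fun y => Ei y * ∫ v in r..y, f v * g v) (Ici r) := hEi_cont.mul h2
    exact ⟨h2, aux_ftc h3, aux_ftc_cont h3⟩
  -- inner integral nonneg
  have hInn : ∀ f : ℝ → ℝ, (∀ v ∈ Ici r, 0 ≤ f v) → ∀ y ∈ Ici r,
      0 ≤ ∫ v in r..y, f v * g v := by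
    intro f hf y hy
    exact intervalIntegral.integral_nonneg hy
      (fun v hv => mul_nonneg (hf v hv.1) (hg_nonneg v hv.1))
  -- continuity, nonnegativity, monotonicity of each u n
  have base : ∀ n : ℕ, ContinuousOn (u n) (Ici r) ∧ (∀ x ∈ Ici r, 0 ≤ u n x) ∧
      MonotoneOn (u n) (Ici r) := by
    intro n
    induction n with
    | zero =>
      have h0 : u 0 = fun _ => (1 : ℝ) := funext hu0
      rw [h0]
      exact ⟨continuousOn_const, fun x _ => zero_le_one, fun x _ y _ _ => le_refl 1⟩
    | succ n ih =>
      obtain ⟨ihc, ihn, ihm⟩ := ih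
      have hd := (hT (u n) ihc).2.1
      have hc := (hT (u n) ihc).2.2
      have hd0 : ∀ x ∈ Ici r, 0 ≤ Ei x * ∫ v in r..x, u n v * g v := fun x hx =>
        mul_nonneg (hEi_pos x).le (hInn (u n) ihn x hx)
      rw [hu_succ n]
      refine ⟨hc, ?_, aux_mono hc hd hd0⟩
      exact aux_nonneg hc hd hd0 (by simp) 
  have hderiv : ∀ (n : ℕ), ∀ x ∈ Ici r, HasDerivWithinAt (u (n + 1))
      (Ei x * ∫ v in r..x, u n v * g v) (Ici r) x := by
    intro n x hx
    rw [hu_succ n]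
    exact (hT (u n) (base n).1).2.1 x hx
  have hur : ∀ n : ℕ, u (n + 1) r = 0 := by
    intro n; rw [hrec]; exact intervalIntegral.integral_same
  -- the key bound uₙ ≤ u₁ⁿ/n!
  have hu1c := (base 1).1
  have hu1nn := (base 1).2.1
  have hu1m := (base 1).2.2
  have hu1r : u 1 r = 0 := hur 0
  have hbound : ∀ n : ℕ, ∀ x ∈ Ici r, u n x ≤ u 1 x ^ n / (n.factorial : ℝ) := by
    intro n
    induction n with
    | zero => intro x hx; simp [hu0]
    | succ n ih =>
      -- key integral inequality
      have hfac : (0 : ℝ) < (n.factorial : ℝ) := by positivity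
      have hIg : ∀ x ∈ Ici r, ∫ v in r..x, u n v * g v ≤
          (u 1 x ^ n / (n.factorial : ℝ)) * ∫ v in r..x, u 0 v * g v := by
        intro x hx
        have hint1 : IntervalIntegrable (fun v => u n v * g v) volume r x := by
          apply ContinuousOn.intervalIntegrable
          rw [uIcc_of_le hx]
          exact ((base n).1.mul hg_cont).mono Icc_subset_Ici_self
        have hint2 : IntervalIntegrable
            (fun v => (u 1 x ^ n / (n.factorial : ℝ)) * (u 0 v * g v)) volume r x := by
          apply ContinuousOn.intervalIntegrable
          rw [uIcc_of_le hx]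
          exact (continuousOn_const.mul ((base 0).1.mul hg_cont)).mono Icc_subset_Ici_self
        have h1 : ∫ v in r..x, u n v * g v ≤
            ∫ v in r..x, (u 1 x ^ n / (n.factorial : ℝ)) * (u 0 v * g v) := by
          apply intervalIntegral.integral_mono_on hx hint1 hint2
          intro v hv
          have hv' : v ∈ Ici r := hv.1
          have h2 : u n v ≤ u 1 x ^ n / (n.factorial : ℝ) := by
            refine (ih v hv').trans ?_
            refine div_le_div_of_nonneg_right ?_ hfac.le
            exact pow_le_pow_left₀ (hu1nn v hv') (hu1m hv' hx hv.2) n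
          calc u n v * g v ≤ (u 1 x ^ n / (n.factorial : ℝ)) * g v :=
                mul_le_mul_of_nonneg_right h2 (hg_nonneg v hv')
            _ = (u 1 x ^ n / (n.factorial : ℝ)) * (u 0 v * g v) := by rw [hu0, one_mul]
        rwa [intervalIntegral.integral_const_mul] at h1
      intro x hx
      -- compare with φ = u1^(n+1)/(n+1)! - u_{n+1}
      have hu1d : ∀ y ∈ Ici r, HasDerivWithinAt (u 1)
          (Ei y * ∫ v in r..y, u 0 v * g v) (Ici r) y := hderiv 0
      have hφd : ∀ y ∈ Ici r, HasDerivWithinAt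
          (fun t => u 1 t ^ (n + 1) / ((n + 1).factorial : ℝ) - u (n + 1) t)
          ((((n : ℝ) + 1) * u 1 y ^ n * (Ei y * ∫ v in r..y, u 0 v * g v)) /
            ((n + 1).factorial : ℝ) - Ei y * ∫ v in r..y, u n v * g v) (Ici r) y := by
        intro y hy
        have := (((hu1d y hy).pow (n + 1)).div_const ((n + 1).factorial : ℝ)).sub
          (hderiv n y hy)
        simp at this
        exact this
      have hφc : ContinuousOn
          (fun t => u 1 t ^ (n + 1) / ((n + 1).factorial : ℝ) - u (n + 1) t) (Ici r) :=
        ((hu1c.pow (n + 1)).div_const _).sub (base (n + 1)).1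
      have hφ0 : ∀ y ∈ Ici r, 0 ≤
          (((n : ℝ) + 1) * u 1 y ^ n * (Ei y * ∫ v in r..y, u 0 v * g v)) /
            ((n + 1).factorial : ℝ) - Ei y * ∫ v in r..y, u n v * g v := by
        intro y hy
        rw [sub_nonneg]
        have h3 : Ei y * ∫ v in r..y, u n v * g v ≤
            Ei y * ((u 1 y ^ n / (n.factorial : ℝ)) * ∫ v in r..y, u 0 v * g v) :=
          mul_le_mul_of_nonneg_left (hIg y hy) (hEi_pos y).le
        refine h3.trans (le_of_eq ?_)
        rw [Nat.factorial_succ]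
        push_cast
        field_simp
      have hφr : (fun t => u 1 t ^ (n + 1) / ((n + 1).factorial : ℝ) - u (n + 1) t) r = 0 := by
        simp [hu1r, hur n]
      have := aux_nonneg hφc hφd hφ0 hφr x hx
      linarith
  -- summability
  have habs : ∀ n : ℕ, ∀ x ∈ Ici r, |u n x| = u n x := fun n x hx =>
    abs_of_nonneg ((base n).2.1 x hx)
  have hsummable : ∀ x ∈ Ici r, Summable (fun n => |u n x|) := by
    intro x hx
    refine Summable.of_nonneg_of_le (fun n => abs_nonneg _) (fun n => ?_)
      (Real.summable_pow_div_factorial (u 1 x))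
    rw [habs n x hx]
    exact hbound n x hx
  have hsumm : ∀ x ∈ Ici r, Summable (fun n => u n x) := by
    intro x hx
    refine Summable.congr (hsummable x hx) (fun n => habs n x hx)
  -- uniform convergence on Icc r b
  have hunif : ∀ b : ℝ, TendstoUniformlyOn (fun N x => ∑ n ∈ Finset.range N, u n x)
      (fun x => ∑' n, u n x) atTop (Icc r b) := by
    intro b
    rcases le_or_gt r b with hb | hb
    · apply tendstoUniformlyOn_tsum_nat (Real.summable_pow_div_factorial (u 1 b))
      intro n x hx
      rw [Real.norm_eq_abs, habs n x hx.1]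
      refine (hbound n x hx.1).trans ?_
      refine div_le_div_of_nonneg_right ?_ (by positivity)
      exact pow_le_pow_left₀ (hu1nn x hx.1) (hu1m hx.1 hb hx.2) n
    · rw [Icc_eq_empty (by linarith)]
      intro v hv
      filter_upwards with N y hy
      exact absurd hy (notMem_empty y)
  have hTLU : TendstoLocallyUniformlyOn (fun N x => ∑ n ∈ Finset.range N, u n x)
      (fun x => ∑' n, u n x) atTop (Ici r) := by
    intro v hv x hx
    refine ⟨Icc r (x + 1), ?_, hunif (x + 1) v hv⟩
    rw [← Ici_inter_Iic]
    exact inter_mem_nhdsWithin (Ici r) (Iic_mem_nhds (by linarith))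
  -- continuity of the sum
  have hU_cont : ContinuousOn (fun x => ∑' n, u n x) (Ici r) := by
    apply hTLU.continuousOn
    refine Filter.Frequently.of_forall (fun N => ?_)
    exact continuousOn_finset_sum _ (fun n _ => (base n).1)
  -- monotonicity of the sum
  have hU_mono : MonotoneOn (fun x => ∑' n, u n x) (Ici r) := by
    intro x hx y hy hxy
    exact Summable.tsum_le_tsum (fun n => (base n).2.2 hx hy hxy) (hsumm x hx) (hsumm y hy)
  -- swap sum and inner integral
  have hlen : ∀ x : ℝ, r ≤ x → (volume (Ioc r x)).toReal = x - r := by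
    intro x hx
    rw [Real.volume_Ioc, ENNReal.toReal_ofReal (by linarith)]
  have hinner : ∀ x ∈ Ici r, (∑' n, ∫ v in r..x, u n v * g v) =
      ∫ v in r..x, (∑' n, u n v) * g v := by
    intro x hx
    obtain ⟨C, hC⟩ := (isCompact_Icc (a := r) (b := x)).exists_bound_of_continuousOn
      (hg_cont.mono Icc_subset_Ici_self)
    have hFbd : ∀ n : ℕ, ∀ v ∈ Icc r x, ‖u n v * g v‖ ≤ (u 1 x ^ n / (n.factorial : ℝ)) * C := by
      intro n v hv
      rw [norm_mul]
      have h1 : ‖u n v‖ ≤ u 1 x ^ n / (n.factorial : ℝ) := by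
        rw [Real.norm_eq_abs, habs n v hv.1]
        refine (hbound n v hv.1).trans ?_
        refine div_le_div_of_nonneg_right ?_ (by positivity)
        exact pow_le_pow_left₀ (hu1nn v hv.1) (hu1m hv.1 hx hv.2) n
      exact mul_le_mul h1 (hC v hv) (norm_nonneg _)
        (div_nonneg (pow_nonneg (hu1nn x hx) n) (by positivity))
    have hint : ∀ n : ℕ, IntegrableOn (fun v => u n v * g v) (Ioc r x) volume := by
      intro n
      exact ((((base n).1.mul hg_cont).mono Icc_subset_Ici_self).integrableOn_Icc).mono_set
        Ioc_subset_Icc_self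
    have hsum : Summable (fun n => ∫ v in Ioc r x, ‖u n v * g v‖) := by
      refine Summable.of_nonneg_of_le (fun n => integral_nonneg (fun v => norm_nonneg _))
        (fun n => ?_) (((Real.summable_pow_div_factorial (u 1 x)).mul_right
          (C * (volume (Ioc r x)).toReal)))
      have h2 : ‖∫ v in Ioc r x, ‖u n v * g v‖‖ ≤
          ((u 1 x ^ n / (n.factorial : ℝ)) * C) * (volume (Ioc r x)).toReal := by
        apply norm_setIntegral_le_of_norm_le_const measure_Ioc_lt_top
        · intro v hv
          rw [norm_norm]
          exact hFbd n v (Ioc_subset_Icc_self hv)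
      calc (∫ v in Ioc r x, ‖u n v * g v‖) ≤ ‖∫ v in Ioc r x, ‖u n v * g v‖‖ := le_abs_self _
        _ ≤ ((u 1 x ^ n / (n.factorial : ℝ)) * C) * (volume (Ioc r x)).toReal := h2
        _ = (u 1 x ^ n / (n.factorial : ℝ)) * (C * (volume (Ioc r x)).toReal) := by ring
    have hswap := MeasureTheory.integral_tsum_of_summable_integral_norm hint hsum
    have e1 : ∀ n : ℕ, (∫ v in r..x, u n v * g v) = ∫ v in Ioc r x, u n v * g v := fun n =>
      intervalIntegral.integral_of_le hx
    rw [tsum_congr e1, hswap, intervalIntegral.integral_of_le hx]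
    apply setIntegral_congr_fun measurableSet_Ioc
    intro v hv
    exact tsum_mul_right
  -- swap sum and outer integral
  have houter : ∀ x ∈ Ici r, (∑' n, u (n + 1) x) =
      ∫ y in r..x, Ei y * ∫ v in r..y, (∑' n, u n v) * g v := by
    intro x hx
    obtain ⟨C, hC⟩ := (isCompact_Icc (a := r) (b := x)).exists_bound_of_continuousOn
      (hg_cont.mono Icc_subset_Ici_self)
    have hC0 : 0 ≤ C := le_trans (norm_nonneg _) (hC r ⟨le_refl r, hx⟩)
    have hGbd : ∀ n : ℕ, ∀ y ∈ Icc r x, ‖Ei y * ∫ v in r..y, u n v * g v‖ ≤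
        (u 1 x ^ n / (n.factorial : ℝ)) * (C * (x - r)) := by
      intro n y hy
      rw [norm_mul]
      have h1 : ‖∫ v in r..y, u n v * g v‖ ≤ ((u 1 x ^ n / (n.factorial : ℝ)) * C) * |y - r| := by
        apply intervalIntegral.norm_integral_le_of_norm_le_const
        intro v hv
        rw [uIoc_of_le hy.1] at hv
        have hv' : v ∈ Icc r x := ⟨hv.1.le, hv.2.trans hy.2⟩
        rw [norm_mul]
        have h2 : ‖u n v‖ ≤ u 1 x ^ n / (n.factorial : ℝ) := by
          rw [Real.norm_eq_abs, habs n v hv'.1]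
          refine (hbound n v hv'.1).trans ?_
          refine div_le_div_of_nonneg_right ?_ (by positivity)
          exact pow_le_pow_left₀ (hu1nn v hv'.1) (hu1m hv'.1 hx hv'.2) n
        exact mul_le_mul h2 (hC v hv') (norm_nonneg _)
          (div_nonneg (pow_nonneg (hu1nn x hx) n) (by positivity))
      have h3 : ‖Ei y‖ ≤ 1 := by
        rw [Real.norm_eq_abs, abs_of_pos (hEi_pos y)]
        exact hEi_le_one y hy.1
      calc ‖Ei y‖ * ‖∫ v in r..y, u n v * g v‖
          ≤ 1 * (((u 1 x ^ n / (n.factorial : ℝ)) * C) * |y - r|) :=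
            mul_le_mul h3 h1 (norm_nonneg _) zero_le_one
        _ = (u 1 x ^ n / (n.factorial : ℝ)) * C * |y - r| := by ring
        _ ≤ (u 1 x ^ n / (n.factorial : ℝ)) * (C * (x - r)) := by
            rw [abs_of_nonneg (by linarith [hy.1] : (0:ℝ) ≤ y - r)]
            have : y - r ≤ x - r := by linarith [hy.2]
            calc u 1 x ^ n / (n.factorial : ℝ) * C * (y - r)
                ≤ u 1 x ^ n / (n.factorial : ℝ) * C * (x - r) := by
                  apply mul_le_mul_of_nonneg_left this
                    (mul_nonneg (div_nonneg (pow_nonneg (hu1nn x hx) n) (by positivity)) hC0)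
              _ = u 1 x ^ n / (n.factorial : ℝ) * (C * (x - r)) := by ring
    have hint : ∀ n : ℕ, IntegrableOn (fun y => Ei y * ∫ v in r..y, u n v * g v)
        (Ioc r x) volume := by
      intro n
      exact (((hEi_cont.mul (hT (u n) (base n).1).1).mono
        Icc_subset_Ici_self).integrableOn_Icc).mono_set Ioc_subset_Icc_self
    have hsum : Summable (fun n => ∫ y in Ioc r x, ‖Ei y * ∫ v in r..y, u n v * g v‖) := by
      refine Summable.of_nonneg_of_le (fun n => integral_nonneg (fun v => norm_nonneg _))
        (fun n => ?_) (((Real.summable_pow_div_factorial (u 1 x)).mul_right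
          ((C * (x - r)) * (volume (Ioc r x)).toReal)))
      have h2 : ‖∫ y in Ioc r x, ‖Ei y * ∫ v in r..y, u n v * g v‖‖ ≤
          ((u 1 x ^ n / (n.factorial : ℝ)) * (C * (x - r))) * (volume (Ioc r x)).toReal := by
        apply norm_setIntegral_le_of_norm_le_const measure_Ioc_lt_top
        · intro y hy
          rw [norm_norm]
          exact hGbd n y (Ioc_subset_Icc_self hy)
      calc (∫ y in Ioc r x, ‖Ei y * ∫ v in r..y, u n v * g v‖)
          ≤ ‖∫ y in Ioc r x, ‖Ei y * ∫ v in r..y, u n v * g v‖‖ := le_abs_self _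
        _ ≤ ((u 1 x ^ n / (n.factorial : ℝ)) * (C * (x - r))) * (volume (Ioc r x)).toReal := h2
        _ = (u 1 x ^ n / (n.factorial : ℝ)) * ((C * (x - r)) * (volume (Ioc r x)).toReal) := by
            ring
    have hswap := MeasureTheory.integral_tsum_of_summable_integral_norm hint hsum
    have e1 : ∀ n : ℕ, u (n + 1) x = ∫ y in Ioc r x, Ei y * ∫ v in r..y, u n v * g v := by
      intro n
      rw [hrec n x, intervalIntegral.integral_of_le hx]
    rw [tsum_congr e1, hswap, intervalIntegral.integral_of_le hx]
    apply setIntegral_congr_fun measurableSet_Ioc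
    intro y hy
    have hy' : y ∈ Ici r := hy.1.le
    show (∑' n : ℕ, Ei y * ∫ v in r..y, u n v * g v) =
      Ei y * ∫ v in r..y, (∑' n, u n v) * g v
    rw [tsum_mul_left, hinner y hy']
  -- the integral equation for U
  have hUeq : ∀ x ∈ Ici r, (∑' n, u n x) =
      1 + ∫ y in r..x, Ei y * ∫ v in r..y, (∑' n, u n v) * g v := by
    intro x hx
    rw [Summable.tsum_eq_zero_add (hsumm x hx), hu0 x, houter x hx]
  have hUg_cont : ContinuousOn (fun v => (∑' n, u n v) * g v) (Ici r) := hU_cont.mul hg_cont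
  have hF_cont : ContinuousOn (fun y => ∫ v in r..y, (∑' n, u n v) * g v) (Ici r) :=
    aux_ftc_cont hUg_cont
  have hF_deriv := aux_ftc hUg_cont
  have hH_cont : ContinuousOn (fun y => Ei y * ∫ v in r..y, (∑' n, u n v) * g v) (Ici r) :=
    hEi_cont.mul hF_cont
  refine ⟨hsummable, hTLU, hU_mono,
    fun x => Ei x * ∫ v in r..x, (∑' n, u n v) * g v,
    fun x => 2 * (∑' n, u n x) / A x -
      B x * (Ei x * ∫ v in r..x, (∑' n, u n v) * g v), ?_, ?_, hH_cont, ?_, ?_⟩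
  · -- first derivative
    intro x hx
    have h1 : HasDerivWithinAt
        (fun t => 1 + ∫ y in r..t, Ei y * ∫ v in r..y, (∑' n, u n v) * g v)
        (Ei x * ∫ v in r..x, (∑' n, u n v) * g v) (Ici r) x :=
      (aux_ftc hH_cont x hx).const_add 1
    exact h1.congr (fun y hy => hUeq y hy) (hUeq x hx)
  · -- second derivative
    intro x hx
    have hPd : HasDerivWithinAt (fun y => ∫ z in r..y, B z) (B x) (Ici r) x :=
      aux_ftc hB_cont x hx
    have hEid : HasDerivWithinAt Ei (Ei x * -B x) (Ici r) x := by
      rw [hEi_fun]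
      simpa using hPd.neg.exp
    have hmul := hEid.mul (hF_deriv x hx)
    convert hmul using 1
    · rfl
    · rfl
    · rfl
    have hE1 : Ei x * Real.exp (∫ z in r..x, B z) = 1 := by
      rw [hEi x, ← Real.exp_add]; simp
    rw [hg x]
    linear_combination (-(2 * (∑' n, u n x) / A x)) * hE1
  · -- continuity of U''
    exact ((continuousOn_const.mul hU_cont).div hA_cont (fun x hx => (hA_pos x hx).ne')).sub
      (hB_cont.mul hH_cont)
  · -- the ODE
    intro x hx
    have hAne : A x ≠ 0 := (hA_pos x hx).ne'
    field_simp
    ring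
end

section
/- Let d ≥ 3 and let α : (0,∞) → (0,∞) be continuous. Set A(x) = 2x α(√(2x)), B(x) = d/(2x), C(z) = exp(∫_{1/2}^z B(σ) dσ). If ∫_1^∞ ρ/α(ρ) dρ < ∞, then ∫_{1/2}^∞ (∫_{1/2}^z C(σ)/A(σ) dσ)/C(z) dz < ∞ and ∫_0^{1/2} (∫_z^{1/2} C(σ)/A(σ) dσ)/C(z) dz = ∞. -/
open MeasureTheory Set intervalIntegral

set_option maxHeartbeats 1600000 in
/-- For `d ≥ 3`, if `∫_1^∞ ρ/α(ρ) dρ < ∞`, then the outer double integral on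
`(1/2, ∞)` is finite and the one on `(0, 1/2)` is infinite. -/
theorem condition_NL1_from_example (d : ℕ) (hd : 3 ≤ d) (α : ℝ → ℝ)
    (hα_cont : ContinuousOn α (Ioi 0)) (hα_pos : ∀ x ∈ Ioi (0:ℝ), 0 < α x)
    (A B C : ℝ → ℝ)
    (hA : ∀ x, A x = 2 * x * α (Real.sqrt (2 * x)))
    (hB : ∀ x, B x = (d : ℝ) / (2 * x))
    (hC : ∀ z, C z = Real.exp (∫ σ in (1/2 : ℝ)..z, B σ))
    (hfin : ∫⁻ ρ in Ioi (1 : ℝ), ENNReal.ofReal (ρ / α ρ) < ⊤) :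
    (∫⁻ z in Ioi (1/2 : ℝ),
        ENNReal.ofReal ((∫ σ in (1/2 : ℝ)..z, C σ / A σ) / C z) < ⊤) ∧
    (∫⁻ z in Ioc (0:ℝ) (1/2 : ℝ),
        ENNReal.ofReal ((∫ σ in z..(1/2 : ℝ), C σ / A σ) / C z) = ⊤) := by
  have hd3 : (3:ℝ) ≤ (d:ℝ) := by exact_mod_cast hd
  set r : ℝ := (d:ℝ)/2 with hr
  have hCz : ∀ z, 0 < z → C z = (2*z) ^ r := by
    intro z hz
    have h0 : (0:ℝ) ∉ Set.uIcc (1/2:ℝ) z := by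
      rw [Set.mem_uIcc]; push_neg; constructor <;> intro h <;> nlinarith
    have hint : (∫ σ in (1/2 : ℝ)..z, B σ) = r * Real.log (2*z) := by
      have hcg : ∀ σ ∈ Set.uIcc (1/2:ℝ) z, B σ = r * (1/σ) := by
        intro σ _; rw [hB, hr]; ring
      rw [intervalIntegral.integral_congr hcg, intervalIntegral.integral_const_mul,
        integral_one_div h0]
      have : z / (1/2 : ℝ) = 2*z := by ring
      rw [this]
    rw [hC, hint, Real.rpow_def_of_pos (by linarith), mul_comm]
  -- positivity of A
  have hApos : ∀ x, 0 < x → 0 < A x := by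
    intro x hx
    rw [hA]
    have h2x : 0 < 2*x := by linarith
    exact mul_pos h2x (hα_pos _ (Real.sqrt_pos.mpr h2x))
  have hCpos : ∀ z, 0 < C z := fun z => by rw [hC]; exact Real.exp_pos _
  -- continuity of C/A on Ioi 0
  have hA_cont : ContinuousOn A (Ioi 0) := by
    have : ContinuousOn (fun x => 2 * x * α (Real.sqrt (2 * x))) (Ioi 0) := by
      apply ContinuousOn.mul (by fun_prop)
      apply hα_cont.comp (by fun_prop)
      intro x hx
      exact Real.sqrt_pos.mpr (by simp at hx ⊢; linarith)
    exact this.congr (fun x _ => hA x)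
  have hC_cont : ContinuousOn C (Ioi 0) := by
    have : ContinuousOn (fun z : ℝ => (2*z) ^ r) (Ioi 0) := by
      apply ContinuousOn.rpow_const (by fun_prop)
      intro x hx; left; simp at hx; positivity
    exact this.congr (fun x hx => hCz x hx)
  have hCA_cont : ContinuousOn (fun σ => C σ / A σ) (Ioi 0) :=
    hC_cont.div hA_cont (fun x hx => (hApos x hx).ne')
  have hCApos : ∀ σ, 0 < σ → 0 < C σ / A σ := fun σ hσ => div_pos (hCpos σ) (hApos σ hσ)
  constructor
  · -- Part 1: finiteness
    have hr1 : 1 < r := by rw [hr]; linarith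
    set μ : Measure ℝ := volume.restrict (Ioi (1/2 : ℝ)) with hμ
    set g : ℝ → ENNReal := fun σ => ENNReal.ofReal (C σ / A σ) with hg
    set h : ℝ → ENNReal := fun z => ENNReal.ofReal ((2*z) ^ (-r)) with hh
    set G : ℝ → ℝ := fun σ => 1 / (((d:ℝ) - 2) * α (Real.sqrt (2*σ))) with hG
    -- measurability
    have hgm : AEMeasurable g μ := by
      refine (ENNReal.measurable_ofReal.comp_aemeasurable ?_)
      exact ((hCA_cont.mono (fun x hx => lt_trans (by norm_num) hx)).aemeasurable
        measurableSet_Ioi)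
    have hhm : Measurable h := by
      apply ENNReal.measurable_ofReal.comp
      fun_prop
    have hGnn : ∀ σ, 0 < σ → 0 ≤ G σ := by
      intro σ hσ
      rw [hG]
      have h1 := hα_pos _ (Real.sqrt_pos.mpr (by linarith : (0:ℝ) < 2*σ))
      have h2 : (0:ℝ) < (d:ℝ) - 2 := by linarith
      positivity
    -- Step A: rewrite integrand
    have stepA : ∀ z ∈ Ioi (1/2:ℝ),
        ENNReal.ofReal ((∫ σ in (1/2 : ℝ)..z, C σ / A σ) / C z)
          = (∫⁻ σ in Ioc (1/2:ℝ) z, g σ) * h z := by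
      intro z hz
      rw [mem_Ioi] at hz
      have hz0 : (0:ℝ) < z := by linarith
      have hIoc : Ioc (1/2:ℝ) z ⊆ Ioi 0 := fun x hx => lt_trans (by norm_num) hx.1
      have hintOn : IntegrableOn (fun σ => C σ / A σ) (Ioc (1/2:ℝ) z) := by
        apply (hCA_cont.mono ?_).integrableOn_compact isCompact_Icc |>.mono_set
          Ioc_subset_Icc_self
        intro x hx; exact lt_of_lt_of_le (by norm_num) hx.1
      have hnn : 0 ≤ᵐ[volume.restrict (Ioc (1/2:ℝ) z)] (fun σ => C σ / A σ) := by
        filter_upwards [ae_restrict_mem measurableSet_Ioc] with σ hσ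
        exact (hCApos σ (hIoc hσ)).le
      have hI : (∫ σ in (1/2 : ℝ)..z, C σ / A σ) = ∫ σ in Ioc (1/2:ℝ) z, C σ / A σ :=
        intervalIntegral.integral_of_le hz.le
      have hInn : 0 ≤ ∫ σ in Ioc (1/2:ℝ) z, C σ / A σ :=
        setIntegral_nonneg measurableSet_Ioc (fun σ hσ => (hCApos σ (hIoc hσ)).le)
      have hdiv : (∫ σ in Ioc (1/2:ℝ) z, C σ / A σ) / C z
          = (∫ σ in Ioc (1/2:ℝ) z, C σ / A σ) * (2*z) ^ (-r) := by
        rw [hCz z hz0, Real.rpow_neg (by linarith), div_eq_mul_inv]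
      rw [hI, hdiv, ENNReal.ofReal_mul hInn,
        MeasureTheory.ofReal_integral_eq_lintegral_ofReal hintOn hnn]
    rw [setLIntegral_congr_fun measurableSet_Ioi stepA]
    -- Step B: as iterated integral over μ × μ with indicator
    have stepB : (∫⁻ z, (∫⁻ σ in Ioc (1/2:ℝ) z, g σ) * h z ∂μ)
        = ∫⁻ z, ∫⁻ σ, (Ioc (1/2:ℝ) z).indicator g σ * h z ∂μ ∂μ := by
      apply lintegral_congr
      intro z
      rw [lintegral_mul_const'' _ (hgm.indicator measurableSet_Ioc),
        lintegral_indicator measurableSet_Ioc, hμ, Measure.restrict_restrict measurableSet_Ioc]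
      congr 2
      rw [Set.Ioc_inter_Ioi]
      simp
    rw [stepB]
    -- Tonelli swap
    have hS : MeasurableSet {p : ℝ × ℝ | p.2 ≤ p.1} := measurableSet_le measurable_snd measurable_fst
    have huncurry : AEMeasurable (Function.uncurry
        (fun z σ => (Ioc (1/2:ℝ) z).indicator g σ * h z)) (μ.prod μ) := by
      have h1 : AEMeasurable (fun p : ℝ × ℝ => g p.2) (μ.prod μ) := hgm.comp_snd
      have h2 : Function.uncurry (fun z σ => (Ioc (1/2:ℝ) z).indicator g σ * h z)
          = fun p : ℝ × ℝ => ({q : ℝ × ℝ | q.2 ≤ q.1} ∩ {q : ℝ × ℝ | 1/2 < q.2}).indicator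
              (fun q => g q.2) p * h p.1 := by
        ext p
        rw [Function.uncurry]
        by_cases hp : p.2 ∈ Ioc (1/2:ℝ) p.1
        · rw [Set.indicator_of_mem hp, Set.indicator_of_mem (by exact ⟨hp.2, hp.1⟩)]
        · rw [Set.indicator_of_notMem hp, Set.indicator_of_notMem (by
            intro hq; exact hp ⟨hq.2, hq.1⟩)]
      rw [h2]
      exact ((h1.indicator (hS.inter (measurableSet_lt measurable_const measurable_snd))).mul
        (hhm.comp measurable_fst).aemeasurable)
    rw [lintegral_lintegral_swap huncurry]
    -- Step C: compute inner integral
    have stepC : ∀ σ ∈ Ioi (1/2:ℝ),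
        (∫⁻ z, (Ioc (1/2:ℝ) z).indicator g σ * h z ∂μ) = ENNReal.ofReal (G σ) := by
      intro σ hσ
      rw [mem_Ioi] at hσ
      have hσ0 : (0:ℝ) < σ := by linarith
      have hrne' : r - (1:ℝ) ≠ 0 := by intro h0; linarith [sub_eq_zero.mp h0]
      -- rewrite integrand as indicator over z ∈ Ici σ
      have e1 : (fun z => (Ioc (1/2:ℝ) z).indicator g σ * h z)
          = (Ici σ).indicator (fun z => g σ * h z) := by
        ext z
        by_cases hzσ : σ ≤ z
        · rw [Set.indicator_of_mem (by exact hzσ : z ∈ Ici σ),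
            Set.indicator_of_mem (by exact ⟨hσ, hzσ⟩ : σ ∈ Ioc (1/2:ℝ) z)]
        · rw [Set.indicator_of_notMem (by exact hzσ : z ∉ Ici σ),
            Set.indicator_of_notMem (fun hq => hzσ hq.2), zero_mul]
      rw [e1, lintegral_indicator measurableSet_Ici, hμ,
        Measure.restrict_restrict measurableSet_Ici]
      have e2 : Ici σ ∩ Ioi (1/2:ℝ) = Ici σ := by
        apply Set.inter_eq_left.mpr
        intro x hx; exact lt_of_lt_of_le hσ hx
      rw [e2, lintegral_const_mul' _ _ ENNReal.ofReal_ne_top]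
      -- compute ∫⁻ z in Ici σ, h z
      have hIciIoi : volume.restrict (Ici σ) = volume.restrict (Ioi σ) :=
        (Measure.restrict_congr_set Ioi_ae_eq_Ici).symm
      have hIntOn : IntegrableOn (fun z : ℝ => (2*z) ^ (-r)) (Ioi σ) := by
        have base : IntegrableOn (fun z : ℝ => (2:ℝ) ^ (-r) * z ^ (-r)) (Ioi σ) :=
          (integrableOn_Ioi_rpow_of_lt (by linarith) hσ0).const_mul _
        apply base.congr_fun ?_ measurableSet_Ioi
        intro z hz
        rw [mem_Ioi] at hz
        exact (Real.mul_rpow (by norm_num) (by linarith)).symm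
      have hK : (∫⁻ z in Ici σ, h z) = ENNReal.ofReal (∫ z in Ioi σ, (2*z) ^ (-r)) := by
        rw [hh]
        rw [show (∫⁻ z in Ici σ, ENNReal.ofReal ((2*z) ^ (-r))) =
          ∫⁻ z in Ioi σ, ENNReal.ofReal ((2*z) ^ (-r)) from by rw [hIciIoi]]
        rw [MeasureTheory.ofReal_integral_eq_lintegral_ofReal hIntOn ?_]
        filter_upwards [ae_restrict_mem measurableSet_Ioi] with z hz
        rw [mem_Ioi] at hz
        exact Real.rpow_nonneg (by linarith) _
      have hval : (∫ z in Ioi σ, (2*z) ^ (-r)) = 2 ^ (-r) * (σ ^ (1 - r) / (r - 1)) := by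
        have e3 : ∀ z ∈ Ioi σ, (2*z : ℝ) ^ (-r) = (2:ℝ) ^ (-r) * z ^ (-r) := by
          intro z hz
          exact Real.mul_rpow (by norm_num) (by rw [mem_Ioi] at hz; linarith)
        rw [setIntegral_congr_fun measurableSet_Ioi e3, MeasureTheory.integral_const_mul _ _,
          integral_Ioi_rpow_of_lt (by linarith) hσ0]
        congr 1
        rw [show (-r + 1 : ℝ) = 1 - r by ring,
          div_eq_div_iff (by intro h0; apply hrne'; linarith [sub_eq_zero.mp h0])
            (by intro h0; apply hrne'; linarith [sub_eq_zero.mp h0])]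
        ring
      rw [hK, hval, ← ENNReal.ofReal_mul (hCApos σ hσ0).le]
      congr 1
      -- real computation
      have hsq := hα_pos _ (Real.sqrt_pos.mpr (by linarith : (0:ℝ) < 2*σ))
      have h2r : ((2:ℝ)*σ) ^ r = 2 ^ r * σ ^ r := Real.mul_rpow (by norm_num) hσ0.le
      have h22 : (2:ℝ) ^ r * 2 ^ (-r) = 1 := by
        rw [← Real.rpow_add (by norm_num)]; simp
      have hσr : σ ^ r * σ ^ (1 - r) = σ := by
        rw [← Real.rpow_add hσ0]; simp
      have keyr : (2:ℝ)^r * σ ^ r * (2 ^ (-r) * σ ^ (1-r)) = σ := by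
        calc (2:ℝ)^r * σ ^ r * (2 ^ (-r) * σ ^ (1-r))
            = (2^r * 2^(-r)) * (σ^r * σ^(1-r)) := by ring
          _ = 1 * σ := by rw [h22, hσr]
          _ = σ := one_mul σ
      have hd2 : (d:ℝ) - 2 = 2*(r-1) := by rw [hr]; ring
      have hrne : r - 1 ≠ 0 := by linarith
      rw [hCz σ hσ0, hA]
      rw [hG]
      beta_reduce
      rw [h2r, hd2]
      set a : ℝ := α (Real.sqrt (2*σ)) with ha
      clear_value a
      have hane : a ≠ 0 := hsq.ne'
      field_simp
      linear_combination keyr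
    rw [setLIntegral_congr_fun measurableSet_Ioi stepC]
    -- Step D: change of variables ρ = sqrt (2σ)
    have hnn1 : 0 ≤ᵐ[volume.restrict (Ioi (1:ℝ))] (fun ρ => ρ / α ρ) := by
      filter_upwards [ae_restrict_mem measurableSet_Ioi] with ρ hρ
      rw [mem_Ioi] at hρ
      exact div_nonneg (by linarith) (hα_pos ρ (by rw [mem_Ioi]; linarith)).le
    have hm1 : AEStronglyMeasurable (fun ρ => ρ / α ρ) (volume.restrict (Ioi (1:ℝ))) := by
      apply ContinuousOn.aestronglyMeasurable ?_ measurableSet_Ioi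
      exact continuousOn_id.div (hα_cont.mono (Ioi_subset_Ioi (by norm_num)))
        (fun x hx => (hα_pos x (mem_Ioi.mpr (lt_trans zero_lt_one hx))).ne')
    have hint1 : IntegrableOn (fun ρ => ρ / α ρ) (Ioi (1:ℝ)) :=
      (MeasureTheory.lintegral_ofReal_ne_top_iff_integrable hm1 hnn1).mp hfin.ne
    have himg : (fun ρ : ℝ => ρ^2/2) '' (Ioi 1) = Ioi (1/2:ℝ) := by
      ext σ
      constructor
      · rintro ⟨ρ, hρ, rfl⟩
        rw [mem_Ioi] at *
        nlinarith
      · intro hσ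
        rw [mem_Ioi] at hσ
        refine ⟨Real.sqrt (2*σ), ?_, ?_⟩
        · rw [mem_Ioi]
          nlinarith [Real.sq_sqrt (by linarith : (0:ℝ) ≤ 2*σ), Real.sqrt_nonneg (2*σ)]
        · show (Real.sqrt (2*σ))^2/2 = σ
          rw [Real.sq_sqrt (by linarith : (0:ℝ) ≤ 2*σ)]; ring
    have hderiv : ∀ x ∈ Ioi (1:ℝ), HasDerivWithinAt (fun ρ : ℝ => ρ^2/2) x (Ioi 1) x := by
      intro x _
      have := ((hasDerivAt_pow 2 x).div_const 2).hasDerivWithinAt (s := Ioi (1:ℝ))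
      simpa using this
    have hinj : InjOn (fun ρ : ℝ => ρ^2/2) (Ioi 1) := by
      intro x hx y hy hxy
      simp only [mem_Ioi] at hx hy
      simp only at hxy
      apply le_antisymm <;> nlinarith
    have hcov := integrableOn_image_iff_integrableOn_abs_deriv_smul measurableSet_Ioi
        hderiv hinj G
    rw [himg] at hcov
    have hGint : IntegrableOn G (Ioi (1/2:ℝ)) := by
      rw [hcov]
      apply MeasureTheory.IntegrableOn.congr_fun (hint1.const_mul (1/((d:ℝ)-2))) ?_ measurableSet_Ioi
      intro x hx
      rw [mem_Ioi] at hx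
      have hx0 : (0:ℝ) < x := by linarith
      have hs : Real.sqrt (2*(x^2/2)) = x := by
        rw [show 2*(x^2/2) = x^2 by ring, Real.sqrt_sq hx0.le]
      have hαx : α x ≠ 0 := (hα_pos x (by rw [mem_Ioi]; linarith)).ne'
      have hdne : (d:ℝ) - 2 ≠ 0 := by intro h0; rw [sub_eq_zero] at h0; linarith
      show 1/((d:ℝ)-2) * (x / α x) = |x| • G (x^2/2)
      rw [hG]
      beta_reduce
      rw [hs, abs_of_pos hx0, smul_eq_mul]
      field_simp
    have hGm : AEStronglyMeasurable G (volume.restrict (Ioi (1/2:ℝ))) := hGint.1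
    have hGnn' : 0 ≤ᵐ[volume.restrict (Ioi (1/2:ℝ))] G := by
      filter_upwards [ae_restrict_mem measurableSet_Ioi] with σ hσ
      exact hGnn σ (by rw [mem_Ioi] at hσ; linarith)
    rw [lt_top_iff_ne_top]
    exact (MeasureTheory.lintegral_ofReal_ne_top_iff_integrable hGm hGnn').mpr hGint
  · -- Part 2: divergence
    have locInt : ∀ a b : ℝ, 0 < a → 0 < b →
        IntervalIntegrable (fun σ => C σ / A σ) volume a b := by
      intro a b ha hb
      apply (hCA_cont.mono ?_).intervalIntegrable
      rw [Set.uIcc_eq_union]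
      rintro x (hx | hx) <;> simp only [Set.mem_Icc, Set.mem_Ioi] at * <;> linarith [hx.1]
    set c : ℝ := ∫ σ in (1/4:ℝ)..(1/2), C σ / A σ with hcdef
    have hc : 0 < c := by
      apply intervalIntegral.intervalIntegral_pos_of_pos_on
        (locInt _ _ (by norm_num) (by norm_num))
        (fun x hx => hCApos x (by linarith [hx.1])) (by norm_num)
    -- pointwise lower bound on Ioc 0 (1/4)
    have key : ∀ z ∈ Ioc (0:ℝ) (1/4),
        ENNReal.ofReal (c * (2*z) ^ (-r)) ≤
        ENNReal.ofReal ((∫ σ in z..(1/2 : ℝ), C σ / A σ) / C z) := by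
      intro z hz
      obtain ⟨hz0, hz4⟩ := hz
      apply ENNReal.ofReal_le_ofReal
      have hsplit : (∫ σ in z..(1/2 : ℝ), C σ / A σ)
          = (∫ σ in z..(1/4 : ℝ), C σ / A σ) + c := by
        rw [hcdef]
        exact (intervalIntegral.integral_add_adjacent_intervals
          (locInt _ _ hz0 (by norm_num)) (locInt _ _ (by norm_num) (by norm_num))).symm
      have h1 : 0 ≤ ∫ σ in z..(1/4 : ℝ), C σ / A σ :=
        intervalIntegral.integral_nonneg hz4
          (fun x hx => (hCApos x (lt_of_lt_of_le hz0 hx.1)).le)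
      have h2 : c * (2*z) ^ (-r) = c / C z := by
        rw [hCz z hz0, Real.rpow_neg (by linarith), div_eq_mul_inv]
      rw [h2, hsplit, div_le_div_iff_of_pos_right (hCpos z)]
      linarith
    -- the lower bound has infinite integral
    have hlow : ∫⁻ z in Ioc (0:ℝ) (1/4), ENNReal.ofReal (c * (2*z) ^ (-r)) = ⊤ := by
      by_contra hne
      have hmeas : AEStronglyMeasurable (fun z : ℝ => c * (2*z) ^ (-r))
          (volume.restrict (Ioc (0:ℝ) (1/4))) := by
        apply Measurable.aestronglyMeasurable
        fun_prop
      have hnn : 0 ≤ᵐ[volume.restrict (Ioc (0:ℝ) (1/4))]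
          (fun z : ℝ => c * (2*z) ^ (-r)) := by
        filter_upwards [ae_restrict_mem measurableSet_Ioc] with z hz
        have hz0 : (0:ℝ) < z := hz.1
        exact mul_nonneg hc.le (Real.rpow_nonneg (by linarith) _)
      have hint : IntegrableOn (fun z : ℝ => c * (2*z) ^ (-r)) (Ioc (0:ℝ) (1/4)) :=
        (MeasureTheory.lintegral_ofReal_ne_top_iff_integrable hmeas hnn).mp hne
      have hint2 : IntegrableOn (fun z : ℝ => z ^ (-r)) (Ioo (0:ℝ) (1/4)) := by
        have h' := (hint.mono_set Ioo_subset_Ioc_self).const_mul ((c * 2 ^ (-r))⁻¹)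
        apply MeasureTheory.IntegrableOn.congr_fun h' ?_ measurableSet_Ioo
        intro x hx
        have hx0 : 0 < x := hx.1
        have h2x : (2*x) ^ (-r) = 2 ^ (-r) * x ^ (-r) :=
          Real.mul_rpow (by norm_num) hx0.le
        have hcne : c ≠ 0 := hc.ne'
        have h2ne : (2:ℝ) ^ (-r) ≠ 0 := (Real.rpow_pos_of_pos (by norm_num) _).ne'
        show (c * 2 ^ (-r))⁻¹ * (c * (2 * x) ^ (-r)) = x ^ (-r)
        rw [h2x]
        field_simp
      rw [integrableOn_Ioo_rpow_iff (by norm_num : (0:ℝ) < 1/4)] at hint2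
      rw [hr] at hint2; linarith
    refine eq_top_iff.mpr ?_
    calc (⊤ : ENNReal) = (∫⁻ z in Ioc (0:ℝ) (1/4), ENNReal.ofReal (c * (2*z) ^ (-r))) := hlow.symm
      _ ≤ (∫⁻ z in Ioc (0:ℝ) (1/4),
          ENNReal.ofReal ((∫ σ in z..(1/2 : ℝ), C σ / A σ) / C z)) := by
          apply setLIntegral_mono_ae' measurableSet_Ioc
          filter_upwards with z hz using key z hz
      _ ≤ _ := lintegral_mono_set (by intro x hx; exact ⟨hx.1, by linarith [hx.2]⟩)
end
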